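/- Let u : ℝ → E solve u'(t) + A u(t) + N(u(t)) = F in a finite-dimensional inner product space E, where A is a bounded linear operator satisfying ⟪A x, x⟫ ≥ ℓ₀‖x‖² for some ℓ₀ > 0, N satisfies ⟪N(x), x⟫ = 0 for all x, and ‖F(t)‖ ≤ M for all t. Then ‖u(t)‖² ≤ e^{-ℓ₀ t}‖u(0)‖² + (M²/ℓ₀²)(1 - e^{-ℓ₀ t}) for all t ≥ 0. -/

import Mathlib

theorem stmt_1 {E : Type*} [NormedAddCommGroup E] [InnerProductSpace ℝ E]
    [FiniteDimensional ℝ E]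
    (A : E →L[ℝ] E) (ℓ₀ : ℝ) (hℓ₀ : 0 < ℓ₀)
    (hA : ∀ x : E, ℓ₀ * ‖x‖ ^ 2 ≤ (inner ℝ (A x) x : ℝ))
    (N : E → E) (hN : ∀ x : E, (inner ℝ (N x) x : ℝ) = 0)
    (F : ℝ → E) (M : ℝ) (hF : ∀ t : ℝ, ‖F t‖ ≤ M)
    (u u' : ℝ → E) (hu : ∀ t : ℝ, HasDerivAt u (u' t) t)
    (heq : ∀ t : ℝ, u' t + A (u t) + N (u t) = F t) :
    ∀ t : ℝ, 0 ≤ t →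
      ‖u t‖ ^ 2 ≤ Real.exp (-ℓ₀ * t) * ‖u 0‖ ^ 2 +
        (M ^ 2 / ℓ₀ ^ 2) * (1 - Real.exp (-ℓ₀ * t)) := by
  set c : ℝ := M ^ 2 / ℓ₀ ^ 2 with hc
  set g : ℝ → ℝ := fun t => Real.exp (ℓ₀ * t) * (‖u t‖ ^ 2 - c) with hg
  -- derivative of ‖u t‖²
  have hy : ∀ t : ℝ, HasDerivAt (fun s => ‖u s‖ ^ 2)
      (2 * (inner ℝ (u' t) (u t) : ℝ)) t := by
    intro t
    have h1 : HasDerivAt (fun s => (inner ℝ (u s) (u s) : ℝ))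
        ((inner ℝ (u t) (u' t) : ℝ) + (inner ℝ (u' t) (u t) : ℝ)) t :=
      (hu t).inner ℝ (hu t)
    have h2 : (fun s => (inner ℝ (u s) (u s) : ℝ)) = fun s => ‖u s‖ ^ 2 := by
      funext s; rw [real_inner_self_eq_norm_sq]
    rw [h2] at h1
    convert h1 using 1
    rw [real_inner_comm (u' t) (u t)]; ring
  have hg' : ∀ t : ℝ, HasDerivAt g
      (Real.exp (ℓ₀ * t) * ℓ₀ * (‖u t‖ ^ 2 - c)
        + Real.exp (ℓ₀ * t) * (2 * (inner ℝ (u' t) (u t) : ℝ))) t := by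
    intro t
    have he : HasDerivAt (fun s => Real.exp (ℓ₀ * s)) (Real.exp (ℓ₀ * t) * ℓ₀) t := by
      have := (Real.hasDerivAt_exp (ℓ₀ * t)).comp t
        ((hasDerivAt_id t).const_mul ℓ₀)
      simpa [mul_comm, Function.comp_def] using this
    exact he.mul ((hy t).sub_const c)
  have hderiv_nonpos : ∀ t : ℝ, deriv g t ≤ 0 := by
    intro t
    rw [(hg' t).deriv]
    have hMnn : 0 ≤ M := le_trans (norm_nonneg _) (hF t)
    have hu'eq : u' t = F t - A (u t) - N (u t) := by
      rw [← heq t]; abel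
    have hinner : (inner ℝ (u' t) (u t) : ℝ)
        = (inner ℝ (F t) (u t) : ℝ) - (inner ℝ (A (u t)) (u t) : ℝ) := by
      rw [hu'eq, inner_sub_left, inner_sub_left, hN]; ring
    have hFu : (inner ℝ (F t) (u t) : ℝ) ≤ M * ‖u t‖ := by
      calc (inner ℝ (F t) (u t) : ℝ) ≤ ‖F t‖ * ‖u t‖ := real_inner_le_norm _ _
        _ ≤ M * ‖u t‖ := by gcongr; exact hF t
    have hAu := hA (u t)
    have key : 2 * (inner ℝ (u' t) (u t) : ℝ) ≤ -ℓ₀ * ‖u t‖ ^ 2 + M ^ 2 / ℓ₀ := by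
      rw [hinner]
      have h1 : ℓ₀ * (2 * ((inner ℝ (F t) (u t) : ℝ) - (inner ℝ (A (u t)) (u t) : ℝ)))
          ≤ ℓ₀ * (-ℓ₀ * ‖u t‖ ^ 2 + M ^ 2 / ℓ₀) := by
        have hc2 : ℓ₀ * (M ^ 2 / ℓ₀) = M ^ 2 := by field_simp
        nlinarith [sq_nonneg (ℓ₀ * ‖u t‖ - M), hFu, hAu]
      exact le_of_mul_le_mul_left h1 hℓ₀
    have hepos : 0 < Real.exp (ℓ₀ * t) := Real.exp_pos _
    have hcℓ : c * ℓ₀ = M ^ 2 / ℓ₀ := by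
      rw [hc, div_mul_eq_mul_div, div_eq_div_iff (by positivity) (by positivity)]; ring
    nlinarith [mul_le_mul_of_nonneg_left key hepos.le]
  have hmono : Antitone g := by
    refine antitone_of_deriv_nonpos (fun t => (hg' t).differentiableAt) hderiv_nonpos
  intro t ht
  have hgt : g t ≤ g 0 := hmono ht
  simp only [hg, mul_zero, Real.exp_zero, one_mul] at hgt
  have hepos : 0 < Real.exp (ℓ₀ * t) := Real.exp_pos _
  have hmul := mul_le_mul_of_nonneg_left hgt (le_of_lt (Real.exp_pos (-ℓ₀ * t)))
  have hid : Real.exp (-ℓ₀ * t) * Real.exp (ℓ₀ * t) = 1 := by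
    rw [← Real.exp_add]; ring_nf; exact Real.exp_zero
  have h3 : ‖u t‖ ^ 2 - c ≤ Real.exp (-ℓ₀ * t) * (‖u 0‖ ^ 2 - c) := by
    calc ‖u t‖ ^ 2 - c
        = Real.exp (-ℓ₀ * t) * (Real.exp (ℓ₀ * t) * (‖u t‖ ^ 2 - c)) := by
          rw [← mul_assoc, hid, one_mul]
      _ ≤ _ := hmul
  nlinarith [h3]
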